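/- Define f : ℝ → ℝ by f(x) = |x|^{1/4} if |x| ≤ 1 and f(x) = 1 if |x| > 1, and let W : ℝ → ℝ be the 1-periodic function with W(y) = 1/2 − |y| for y ∈ [−1/2, 1/2]. Then for every ε ∈ (0, 2^{−80}) and every z ∈ ℝ, one has f(εz) + W(z) ≥ (1/32) ε^{1/4}. -/
import Mathlib


open Real Set

noncomputable section

/-- `f(x) = |x|^{1/4}` for `|x| ≤ 1`, and `f(x) = 1` for `|x| > 1`. -/
def f (x : ℝ) : ℝ := if |x| ≤ 1 then |x| ^ ((1:ℝ)/4) else 1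

/-- The 1-periodic extension of `y ↦ 1/2 − |y|` from `[−1/2, 1/2]`; equivalently
`W(y) = 1/2 − dist(y, ℤ)`. -/
def W (y : ℝ) : ℝ := 1/2 - |y - round y|

/-- Pointwise potential estimate underlying Proposition 4.2:
`f(εz) + W(z) ≥ (1/32) ε^{1/4}` for all `z` and all `ε ∈ (0, 2^{−80})`. -/
theorem stmt_8 :
    ∀ ε : ℝ, 0 < ε → ε < (2:ℝ) ^ (-80 : ℤ) →
      ∀ z : ℝ, (1/32 : ℝ) * ε ^ ((1:ℝ)/4) ≤ f (ε * z) + W z := by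
  intro ε hε h80 z
  have hε1 : ε ≤ 1 := le_of_lt (lt_of_lt_of_le h80 (by norm_num))
  have hεpow1 : ε ^ ((1:ℝ)/4) ≤ 1 := Real.rpow_le_one hε.le hε1 (by norm_num)
  have hεpow0 : 0 ≤ ε ^ ((1:ℝ)/4) := Real.rpow_nonneg hε.le _
  have hW0 : 0 ≤ W z := by
    have := abs_sub_round z
    unfold W; linarith
  have hf0 : 0 ≤ f (ε * z) := by
    unfold f
    split
    · exact Real.rpow_nonneg (abs_nonneg _) _
    · norm_num
  by_cases hz : |z| ≤ 1/4
  · -- W z ≥ 1/4 suffices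
    have hr : round z = 0 := by
      rw [round_eq_zero_iff]
      rcases abs_le.mp hz with ⟨h1, h2⟩
      simp only [Set.mem_Ico]
      constructor <;> linarith
    have hWz : 1/4 ≤ W z := by
      unfold W
      rw [hr]
      push_cast
      rw [sub_zero]
      linarith
    nlinarith
  · push_neg at hz
    have habs : ε / 4 ≤ |ε * z| := by
      rw [abs_mul, abs_of_pos hε]
      nlinarith
    by_cases hle : |ε * z| ≤ 1
    · have hfe : f (ε * z) = |ε * z| ^ ((1:ℝ)/4) := if_pos hle
      have h1 : (ε / 4) ^ ((1:ℝ)/4) ≤ |ε * z| ^ ((1:ℝ)/4) :=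
        Real.rpow_le_rpow (by positivity) habs (by norm_num)
      have h2 : (ε / 4) ^ ((1:ℝ)/4) = ε ^ ((1:ℝ)/4) * (1/4 : ℝ) ^ ((1:ℝ)/4) := by
        rw [div_eq_mul_inv, Real.mul_rpow hε.le (by norm_num)]
        norm_num
      have h3 : (1/2 : ℝ) ≤ (1/4 : ℝ) ^ ((1:ℝ)/4) := by
        have : (1/2 : ℝ) = ((1/16 : ℝ)) ^ ((1:ℝ)/4) := by
          rw [show (1/16 : ℝ) = (1/2 : ℝ) ^ (4:ℕ) by norm_num,
            ← Real.rpow_natCast ((1:ℝ)/2) 4, ← Real.rpow_mul (by norm_num)]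
          norm_num
        rw [this]
        exact Real.rpow_le_rpow (by norm_num) (by norm_num) (by norm_num)
      nlinarith
    · have hfe : f (ε * z) = 1 := if_neg hle
      nlinarith
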